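/- Let k ∈ (0,1) and R > 0, and set γ = −k/(2(1−k)) and A_k^{−1}(τ) = ((1−k)(φ_k(1)+τ))^{1/(1−k)}. There exists a constant C > 0 depending only on k and R such that for all z ≥ R, all y ∈ [R, z], and all b ∈ [A_k^{−1}(y−R), A_k^{−1}(y+R)], setting t = A_k^{−1}(z+R) (so that A_k(t) − z = R), the kernel satisfies E(t,z;b,y;2,0,k) ≥ C (A_k^{−1}(y−R)/t) (z+R)^{−γ} (y+R)^{−γ}. -/
import Mathlib

noncomputable section
open Real

/-- `φ_k(t) = t^{1-k}/(1-k)`. -/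
def phik (k t : ℝ) : ℝ := t ^ (1 - k) / (1 - k)

/-- `A_k(t) = φ_k(t) - φ_k(1)`. -/
def Ak (k t : ℝ) : ℝ := phik k t - phik k 1

/-- Gauss hypergeometric function `F(a,b;c;z)` via its power series. -/
def hypF (a b c z : ℝ) : ℝ :=
  ∑' m : ℕ, (Polynomial.eval a (ascPochhammer ℝ m) * Polynomial.eval b (ascPochhammer ℝ m)
      * z ^ m) / (Polynomial.eval c (ascPochhammer ℝ m) * (m.factorial : ℝ))

/-- `γ = −k/(2(1−k))`. -/
def gamk (k : ℝ) : ℝ := -k / (2 * (1 - k))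

/-- `c = 2^{−1/(1−k)} (1−k)^{k/(1−k)}`. -/
def ck (k : ℝ) : ℝ := (2 : ℝ) ^ (-(1 / (1 - k))) * (1 - k) ^ (k / (1 - k))

/-- the argument `ζ` of the hypergeometric function. -/
def zeta (k t z b y : ℝ) : ℝ :=
  ((phik k t - phik k b) ^ 2 - (y - z) ^ 2) / ((phik k t + phik k b) ^ 2 - (y - z) ^ 2)

/-- the kernel `E(t,z;b,y;2,0,k)`. -/
def EkerEdS (k t z b y : ℝ) : ℝ :=
  ck k * (b / t) * ((phik k t + phik k b) ^ 2 - (y - z) ^ 2) ^ (-(gamk k))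
    * hypF (gamk k) (gamk k) 1 (zeta k t z b y)

/-- the kernel `K₁(t,z;y;2,0,k) = E(t,z;1,y;2,0,k)`. -/
def K1EdS (k t z y : ℝ) : ℝ := EkerEdS k t z 1 y

/-- `A_k⁻¹(τ) = ((1−k)(φ_k(1)+τ))^{1/(1−k)}`, the inverse of `A_k`. -/
def AkInv (k τ : ℝ) : ℝ := ((1 - k) * (phik k 1 + τ)) ^ (1 / (1 - k))

open Filter in
/-- The ratio of consecutive summands of `F(a,a;1;z)` (with `c = 1` the
denominator is `(m!)²`). -/
lemma hypF_summand_succ (a z : ℝ) (m : ℕ) :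
    Polynomial.eval a (ascPochhammer ℝ (m+1)) ^ 2 * z ^ (m+1) / ((m+1).factorial : ℝ) ^ 2
    = (Polynomial.eval a (ascPochhammer ℝ m) ^ 2 * z ^ m / ((m.factorial : ℝ)) ^ 2)
        * ((a + m) ^ 2 * z / ((m:ℝ) + 1) ^ 2) := by
  have hf : (((m+1).factorial : ℝ)) = (m.factorial : ℝ) * ((m:ℝ)+1) := by
    push_cast [Nat.factorial_succ]; ring
  rw [ascPochhammer_succ_right]
  simp only [Polynomial.eval_mul, Polynomial.eval_add, Polynomial.eval_X,
    Polynomial.eval_natCast, hf]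
  have h1 : ((m.factorial : ℝ)) ≠ 0 := Nat.cast_ne_zero.mpr m.factorial_ne_zero
  have h2 : ((m:ℝ)+1) ≠ 0 := by positivity
  field_simp
  ring

open Filter in
/-- For `0 ≤ z < 1`, the hypergeometric series `F(a,a;1;z)` has nonnegative
terms and is summable, hence is at least its first term, which is `1`. -/
lemma one_le_hypF (a z : ℝ) (hz0 : 0 ≤ z) (hz1 : z < 1) : 1 ≤ hypF a a 1 z := by
  set f : ℕ → ℝ := fun m =>
    Polynomial.eval a (ascPochhammer ℝ m) ^ 2 * z ^ m / ((m.factorial : ℝ)) ^ 2 with hf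
  have hfeq : hypF a a 1 z = ∑' m, f m := by
    refine tsum_congr fun m => ?_
    simp [hf, ascPochhammer_eval_one]
    ring
  have hfnonneg : ∀ m, 0 ≤ f m := fun m => by
    have : (0:ℝ) ≤ z ^ m := pow_nonneg hz0 m
    positivity
  have hr : z < (1 + z) / 2 := by linarith
  have hr1 : (1 + z) / 2 < 1 := by linarith
  have htend : Tendsto (fun m : ℕ => (a + m) ^ 2 * z / ((m:ℝ) + 1) ^ 2) atTop (nhds z) := by
    have h0 : Tendsto (fun m : ℕ => (a - 1) * (1 / ((m:ℝ) + 1))) atTop (nhds ((a-1) * 0)) :=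
      tendsto_one_div_add_atTop_nhds_zero_nat.const_mul _
    have h1 : Tendsto (fun m : ℕ => (1 + (a - 1) * (1 / ((m:ℝ) + 1))) ^ 2 * z) atTop
        (nhds ((1 + (a-1)*0) ^ 2 * z)) :=
      ((tendsto_const_nhds.add h0).pow 2).mul tendsto_const_nhds
    have : ∀ m : ℕ, (1 + (a - 1) * (1 / ((m:ℝ) + 1))) ^ 2 * z
        = (a + m) ^ 2 * z / ((m:ℝ) + 1) ^ 2 := by
      intro m
      have h2 : ((m:ℝ)+1) ≠ 0 := by positivity
      rw [eq_div_iff (by positivity : ((m:ℝ)+1)^2 ≠ 0), mul_right_comm, ← mul_pow]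
      have e : (1 + (a - 1) * (1 / ((m:ℝ) + 1))) * ((m:ℝ)+1) = a + m := by
        field_simp; ring
      rw [e]
    have := h1.congr this
    simpa using this
  have hev : ∀ᶠ m : ℕ in atTop, (a + m) ^ 2 * z / ((m:ℝ) + 1) ^ 2 < (1 + z) / 2 :=
    htend.eventually_lt_const hr
  have hsum : Summable f := by
    refine summable_of_ratio_norm_eventually_le hr1 ?_
    filter_upwards [hev] with m hm
    rw [Real.norm_eq_abs, Real.norm_eq_abs, abs_of_nonneg (hfnonneg _),
      abs_of_nonneg (hfnonneg _)]
    calc f (m+1) = f m * ((a + m) ^ 2 * z / ((m:ℝ) + 1) ^ 2) := hypF_summand_succ a z m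
    _ ≤ f m * ((1+z)/2) := mul_le_mul_of_nonneg_left hm.le (hfnonneg m)
    _ = (1+z)/2 * f m := mul_comm _ _
  have h0 : f 0 = 1 := by simp [hf]
  rw [hfeq, ← h0]
  exact Summable.le_tsum hsum 0 fun j _ => hfnonneg j

/-- `φ_k(A_k⁻¹(τ)) = φ_k(1) + τ`. -/
lemma phik_AkInv (k τ : ℝ) (hk1 : 0 < 1 - k) (hτ : 0 ≤ phik k 1 + τ) :
    phik k (AkInv k τ) = phik k 1 + τ := by
  have hX : (0:ℝ) ≤ (1 - k) * (phik k 1 + τ) := by positivity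
  have h : (1 / (1 - k)) * (1 - k) = 1 := by field_simp
  rw [phik, AkInv, ← Real.rpow_mul hX, h, Real.rpow_one]
  field_simp

/-- Lower bound for the kernel `E(t,z;b,y;2,0,k)` on the characteristic
`A_k(t) − z = R` (i.e. `t = A_k⁻¹(z+R)`), for `y ∈ [R,z]` and
`b ∈ [A_k⁻¹(y−R), A_k⁻¹(y+R)]`:
`E ≥ C (A_k⁻¹(y−R)/t) (z+R)^{−γ} (y+R)^{−γ}` with `C = C(k,R) > 0`. -/
theorem kernel_lower_bound_on_characteristic
    (k R : ℝ) (hk : k ∈ Set.Ioo (0 : ℝ) 1) (hR : 0 < R) :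
    ∃ C > (0 : ℝ), ∀ z : ℝ, R ≤ z → ∀ y ∈ Set.Icc R z,
      ∀ b ∈ Set.Icc (AkInv k (y - R)) (AkInv k (y + R)),
        C * (AkInv k (y - R) / AkInv k (z + R))
            * (z + R) ^ (-(gamk k)) * (y + R) ^ (-(gamk k))
          ≤ EkerEdS k (AkInv k (z + R)) z b y := by
  obtain ⟨hk0, hk1'⟩ := hk
  have h1k : 0 < 1 - k := by linarith
  have hck : 0 < ck k := by
    unfold ck
    positivity
  have hγ : 0 ≤ -(gamk k) := by
    unfold gamk
    rw [neg_div, neg_neg]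
    positivity
  have hφ1 : 0 < phik k 1 := by
    rw [phik, Real.one_rpow]
    positivity
  refine ⟨ck k, hck, fun z hz y hy b hb => ?_⟩
  obtain ⟨hyR, hyz⟩ := hy
  obtain ⟨hb1, hb2⟩ := hb
  have hzR : (0:ℝ) < z + R := by linarith
  have hyRp : (0:ℝ) < y + R := by linarith
  have hymR : (0:ℝ) ≤ y - R := by linarith
  set t := AkInv k (z + R) with ht
  have ht0 : 0 < t := by
    rw [ht, AkInv]
    have : (0:ℝ) < (1 - k) * (phik k 1 + (z + R)) := by positivity
    exact Real.rpow_pos_of_pos this _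
  have hbm0 : 0 < AkInv k (y - R) := by
    rw [AkInv]
    have : (0:ℝ) < (1 - k) * (phik k 1 + (y - R)) := by positivity
    exact Real.rpow_pos_of_pos this _
  have hb0 : 0 < b := lt_of_lt_of_le hbm0 hb1
  have hφt : phik k t = phik k 1 + (z + R) :=
    phik_AkInv k (z + R) h1k (by positivity)
  -- monotonicity of phik
  have hmono : ∀ u v : ℝ, 0 ≤ u → u ≤ v → phik k u ≤ phik k v := by
    intro u v hu huv
    rw [phik, phik, div_le_div_iff_of_pos_right h1k]
    exact Real.rpow_le_rpow hu huv h1k.le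
  have hφbl : phik k 1 + (y - R) ≤ phik k b := by
    rw [← phik_AkInv k (y - R) h1k (by positivity)]
    exact hmono _ _ hbm0.le hb1
  have hφbu : phik k b ≤ phik k 1 + (y + R) := by
    rw [← phik_AkInv k (y + R) h1k (by positivity)]
    exact hmono _ _ hb0.le hb2
  have hφt0 : 0 < phik k t := by rw [hφt]; positivity
  have hφb0 : 0 < phik k b := lt_of_lt_of_le (by positivity) hφbl
  -- bounds on the denominator D
  set D := (phik k t + phik k b) ^ 2 - (y - z) ^ 2 with hDdef
  have hf1 : y + R ≤ phik k t + phik k b - (z - y) := by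
    rw [hφt]; linarith
  have hf2 : z + R ≤ phik k t + phik k b + (z - y) := by
    rw [hφt]; linarith
  have hD : (y + R) * (z + R) ≤ D := by
    have hDeq : D = (phik k t + phik k b - (z - y)) * (phik k t + phik k b + (z - y)) := by
      rw [hDdef]; ring
    rw [hDeq]
    exact mul_le_mul hf1 hf2 hzR.le (by linarith)
  have hDpos : 0 < D := lt_of_lt_of_le (by positivity) hD
  -- bounds on zeta
  set N := (phik k t - phik k b) ^ 2 - (y - z) ^ 2 with hNdef
  have hN0 : 0 ≤ N := by
    have h1 : z - y ≤ phik k t - phik k b := by rw [hφt]; linarith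
    have h2 : (z - y) ^ 2 ≤ (phik k t - phik k b) ^ 2 :=
      pow_le_pow_left₀ (by linarith) h1 2
    rw [hNdef]
    nlinarith
  have hNltD : N < D := by
    have := mul_pos hφt0 hφb0
    rw [hNdef, hDdef]
    nlinarith
  have hζ0 : 0 ≤ zeta k t z b y := by
    rw [zeta]
    exact div_nonneg hN0 hDpos.le
  have hζ1 : zeta k t z b y < 1 := by
    rw [zeta]
    exact (div_lt_one hDpos).mpr hNltD
  have hF : 1 ≤ hypF (gamk k) (gamk k) 1 (zeta k t z b y) :=
    one_le_hypF _ _ hζ0 hζ1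
  -- the rpow comparison
  have step2 : ((z + R) * (y + R)) ^ (-(gamk k)) ≤ D ^ (-(gamk k)) := by
    refine Real.rpow_le_rpow (by positivity) ?_ hγ
    rw [mul_comm]; exact hD
  -- finish
  rw [EkerEdS]
  calc ck k * (AkInv k (y - R) / t) * (z + R) ^ (-(gamk k)) * (y + R) ^ (-(gamk k))
      = ck k * (AkInv k (y - R) / t) * ((z + R) * (y + R)) ^ (-(gamk k)) * 1 := by
        rw [Real.mul_rpow hzR.le hyRp.le]; ring
    _ ≤ ck k * (b / t) * D ^ (-(gamk k))
          * hypF (gamk k) (gamk k) 1 (zeta k t z b y) := by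
        gcongr
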